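/- Pivoting identity (Tucker): let A be a skew-symmetric matrix indexed by [n] partitioned so A = [[B, C], [-C^T, D]] with B = A[S] nonsingular, and define A * S = [[B^{-1}, B^{-1}C], [C^T B^{-1}, D + C^T B^{-1} C]]. Then for any X ⊆ [n], det (A*S)[X] = det A[X Δ S] / det A[S]; consequently (A*S)[X] is nonsingular iff A[X Δ S] is nonsingular. -/

import Mathlib

open Matrix
open scoped symmDiff

/-- The principal submatrix of `A` indexed by the finset `X`. -/
def principalSub {ι K : Type*} (A : Matrix ι ι K) (X : Finset ι) :
    Matrix X X K :=
  A.submatrix (fun i => (i : ι)) (fun j => (j : ι))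

section aux
variable {ι K : Type*} [Fintype ι] [DecidableEq ι] [CommRing K]

/-- 0/1 diagonal projection onto the coordinates in `Y`. -/
def tuckerProj (Y : Finset ι) : Matrix ι ι K :=
  Matrix.diagonal (fun i => if i ∈ Y then (1 : K) else 0)

lemma tuckerProj_symmDiff (X S : Finset ι) :
    (tuckerProj (X ∆ S) : Matrix ι ι K)
      = tuckerProj X + tuckerProj S - tuckerProj X * tuckerProj S
        - tuckerProj X * tuckerProj S := by
  simp only [tuckerProj, diagonal_mul_diagonal]
  ext i j
  rcases eq_or_ne i j with rfl | hij
  · simp only [Matrix.sub_apply, Matrix.add_apply, Matrix.diagonal_apply_eq]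
    by_cases hX : i ∈ X <;> by_cases hS : i ∈ S <;>
      simp [hX, hS, Finset.mem_symmDiff]
  · simp [Matrix.diagonal_apply_ne _ hij]

/-- determinant of the "row selection" matrix equals the principal minor. -/
lemma det_tuckerProj_form (M : Matrix ι ι K) (Y : Finset ι) :
    ((1 - tuckerProj Y) + tuckerProj Y * M).det = (principalSub M Y).det := by
  classical
  set E : Matrix ι Y K := fun i j => if (j : ι) = i then 1 else 0 with hE
  have hME : ∀ (N : Matrix Y ι K), N * E = N.submatrix id (fun j : Y => (j : ι)) := by
    intro N; ext i j
    simp only [mul_apply]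
    simp only [mul_apply, hE, mul_ite, mul_one, mul_zero, submatrix_apply, id]
    rw [Finset.sum_ite_eq]
    simp
  have hEM : ∀ (N : Matrix ι ι K), Eᵀ * N = N.submatrix (fun j : Y => (j : ι)) id := by
    intro N; ext j k
    simp only [mul_apply, transpose_apply]
    simp only [mul_apply, hE, transpose_apply, ite_mul, one_mul, zero_mul, submatrix_apply, id]
    rw [Finset.sum_ite_eq]
    simp
  have hproj : ∀ (N : Matrix ι ι K),
      E * (N.submatrix (fun j : Y => (j : ι)) id) = tuckerProj Y * N := by
    intro N; ext i k
    rw [Matrix.mul_apply]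
    simp only [tuckerProj, Matrix.diagonal_mul]
    simp only [hE, ite_mul, one_mul, zero_mul, submatrix_apply, id]
    by_cases h : i ∈ Y
    · rw [Finset.sum_eq_single (⟨i, h⟩ : Y)]
      · simp [h]
      · intro a _ ha
        have : (a : ι) ≠ i := fun hc => ha (Subtype.ext hc)
        simp [this]
      · simp
    · rw [Finset.sum_eq_zero]
      · simp [h]
      · intro a _
        have : (a : ι) ≠ i := fun hc => h (hc ▸ a.2)
        simp [this]
  have h1 : (1 - tuckerProj Y) + tuckerProj Y * M = 1 + E * (Eᵀ * (M - 1)) := by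
    rw [hEM, hproj]
    noncomm_ring
  rw [h1, Matrix.det_one_add_mul_comm]
  congr 1
  rw [hEM, hME, Matrix.submatrix_submatrix]
  ext a b
  simp only [Matrix.add_apply, Matrix.submatrix_apply, Matrix.sub_apply, Function.comp, id,
    principalSub]
  have h2 : (1 : Matrix Y Y K) a b = (1 : Matrix ι ι K) ↑a ↑b := by
    simp [Matrix.one_apply, Subtype.coe_inj]
  rw [h2]
  ring

end aux

/-- Tucker's pivoting identity: let `A = [[B, C], [-Cᵀ, D]]` be skew-symmetric
with `B = A[S]` nonsingular (where `S` is the set of row/column indices of the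
first block), and let `A * S = [[B⁻¹, B⁻¹C], [CᵀB⁻¹, D + CᵀB⁻¹C]]` be the pivot.
Then for every `X`, `det (A*S)[X] = det A[X Δ S] / det A[S]`; consequently
`(A*S)[X]` is nonsingular iff `A[X Δ S]` is nonsingular. -/
theorem tucker_pivoting {α β K : Type*} [Fintype α] [Fintype β]
    [DecidableEq α] [DecidableEq β] [Field K]
    (B : Matrix α α K) (C : Matrix α β K) (D : Matrix β β K)
    (hB : Bᵀ = -B) (hD : Dᵀ = -D) (hBu : IsUnit B.det)
    (A : Matrix (α ⊕ β) (α ⊕ β) K) (hA : A = Matrix.fromBlocks B C (-Cᵀ) D)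
    (AS : Matrix (α ⊕ β) (α ⊕ β) K)
    (hAS : AS = Matrix.fromBlocks B⁻¹ (B⁻¹ * C) (Cᵀ * B⁻¹) (D + Cᵀ * B⁻¹ * C))
    (S : Finset (α ⊕ β))
    (hS : S = (Finset.univ : Finset α).map ⟨Sum.inl, Sum.inl_injective⟩) :
    ∀ X : Finset (α ⊕ β),
      (principalSub AS X).det = (principalSub A (X ∆ S)).det / (principalSub A S).det ∧
      (IsUnit (principalSub AS X).det ↔ IsUnit (principalSub A (X ∆ S)).det) := by
  classical
  intro X
  set A' : Matrix (α ⊕ β) (α ⊕ β) K := Matrix.fromBlocks B (-C) Cᵀ D with hA'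
  set σ : α ⊕ β → K := Sum.elim (fun _ => 1) (fun _ => -1) with hσ
  have hconj : A' = Matrix.diagonal σ * A * Matrix.diagonal σ := by
    rw [hA]
    ext i j
    rw [Matrix.mul_diagonal, Matrix.diagonal_mul]
    cases i <;> cases j <;> simp [hA', hσ]
  have hσ2 : ∀ i, σ i * σ i = 1 := by intro i; cases i <;> simp [hσ]
  have hdet' : ∀ Y : Finset (α ⊕ β), (principalSub A' Y).det = (principalSub A Y).det := by
    intro Y
    have hsub : principalSub A' Y
        = Matrix.diagonal (fun i : Y => σ i) * principalSub A Y
            * Matrix.diagonal (fun i : Y => σ i) := by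
      ext a b
      rw [hconj]
      simp only [principalSub, Matrix.submatrix_apply, Matrix.mul_diagonal, Matrix.diagonal_mul]
    rw [hsub, Matrix.det_mul, Matrix.det_mul, Matrix.det_diagonal]
    have hprod : (∏ i : Y, σ (i : α ⊕ β)) * (∏ i : Y, σ (i : α ⊕ β)) = 1 := by
      rw [← Finset.prod_mul_distrib]
      exact Finset.prod_eq_one fun i _ => hσ2 _
    calc (∏ i : Y, σ (i : α ⊕ β)) * (principalSub A Y).det * (∏ i : Y, σ (i : α ⊕ β))
        = (principalSub A Y).det * ((∏ i : Y, σ (i : α ⊕ β)) * (∏ i : Y, σ (i : α ⊕ β))) := by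
          ring
      _ = (principalSub A Y).det := by rw [hprod, mul_one]
  have hone : (1 : Matrix (α ⊕ β) (α ⊕ β) K)
      = Matrix.fromBlocks (1 : Matrix α α K) 0 0 (1 : Matrix β β K) :=
    Matrix.fromBlocks_one.symm
  have hPS : (tuckerProj S : Matrix (α ⊕ β) (α ⊕ β) K)
      = Matrix.fromBlocks (1 : Matrix α α K) 0 0 0 := by
    ext i j
    simp only [tuckerProj, Matrix.diagonal_apply]
    cases i <;> cases j <;> simp [hS, Matrix.one_apply]
  have hRS : (1 - tuckerProj S) + tuckerProj S * A' = Matrix.fromBlocks B (-C) 0 1 := by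
    rw [hPS, hA', hone, Matrix.fromBlocks_multiply, sub_eq_add_neg, Matrix.fromBlocks_neg,
      Matrix.fromBlocks_add, Matrix.fromBlocks_add, Matrix.fromBlocks_inj]
    refine ⟨?_, ?_, ?_, ?_⟩ <;>
      · simp only [Matrix.mul_zero, Matrix.zero_mul, Matrix.mul_one, Matrix.one_mul,
          add_zero, zero_add, neg_zero, add_neg_cancel, neg_add_cancel]
        try abel
  have hBi : B⁻¹ * B = 1 := Matrix.nonsing_inv_mul B hBu
  have hpivot : AS * ((1 - tuckerProj S) + tuckerProj S * A')
      = tuckerProj S + (1 - tuckerProj S) * A' := by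
    rw [hRS, hAS, hPS, hA', hone, Matrix.fromBlocks_multiply, sub_eq_add_neg,
      Matrix.fromBlocks_neg, Matrix.fromBlocks_add, Matrix.fromBlocks_multiply,
      Matrix.fromBlocks_add, Matrix.fromBlocks_inj]
    refine ⟨?_, ?_, ?_, ?_⟩ <;>
      · simp only [Matrix.mul_assoc, hBi, Matrix.mul_zero, Matrix.zero_mul, Matrix.mul_one,
          Matrix.one_mul, Matrix.mul_neg, Matrix.neg_mul, add_zero, zero_add, neg_zero,
          add_neg_cancel, neg_add_cancel]
        try abel
  have key : ((1 - tuckerProj X) + tuckerProj X * AS)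
        * ((1 - tuckerProj S) + tuckerProj S * A')
      = (1 - tuckerProj (X ∆ S)) + tuckerProj (X ∆ S) * A' := by
    have expand : ((1 - tuckerProj X) + tuckerProj X * AS)
          * ((1 - tuckerProj S) + tuckerProj S * A')
        = (1 - tuckerProj X) * ((1 - tuckerProj S) + tuckerProj S * A')
            + tuckerProj X * (AS * ((1 - tuckerProj S) + tuckerProj S * A')) := by
      rw [Matrix.add_mul, Matrix.mul_assoc]
    rw [expand, hpivot, tuckerProj_symmDiff]
    noncomm_ring
  have hdet : (principalSub AS X).det * (principalSub A S).det
      = (principalSub A (X ∆ S)).det := by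
    have h := congrArg Matrix.det key
    rw [Matrix.det_mul, det_tuckerProj_form, det_tuckerProj_form, det_tuckerProj_form,
      hdet' S, hdet' (X ∆ S)] at h
    exact h
  -- determinant of A[S] equals det B
  have hmem : ∀ a : α, Sum.inl a ∈ S := by intro a; rw [hS]; simp
  have hsurj : Function.Surjective (fun a : α => (⟨Sum.inl a, hmem a⟩ : S)) := by
    rintro ⟨i, hi⟩
    rw [hS] at hi
    simp only [Finset.mem_map, Finset.mem_univ, Function.Embedding.coeFn_mk, true_and] at hi
    obtain ⟨a, ha⟩ := hi
    exact ⟨a, Subtype.ext ha⟩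
  have hinj : Function.Injective (fun a : α => (⟨Sum.inl a, hmem a⟩ : S)) := by
    intro a b h
    exact Sum.inl_injective (congrArg Subtype.val h)
  set e : α ≃ S := Equiv.ofBijective _ ⟨hinj, hsurj⟩ with he
  have hsubB : (principalSub A S).submatrix e e = B := by
    ext a b
    simp [principalSub, hA, he, Equiv.ofBijective]
  have hSdet : (principalSub A S).det = B.det := by
    rw [← Matrix.det_submatrix_equiv_self e (principalSub A S), hsubB]
  have hSu : IsUnit (principalSub A S).det := hSdet ▸ hBu
  have hne : (principalSub A S).det ≠ 0 := hSu.ne_zero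
  refine ⟨by rw [eq_div_iff hne]; exact hdet, ?_, ?_⟩
  · intro h
    rw [← hdet]
    exact h.mul hSu
  · intro h
    rw [← hdet] at h
    exact isUnit_of_mul_isUnit_left h
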